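/- Let P : ℝ × ℝ → ℝ be jointly continuous, and let x₁ : ℝ → ℝ be continuous with x₁(β) > 0 for all β ≥ 0. Assume: (i) P(0, x) > 0 for every x > 0; (ii) P(β, x) < x for every β > 0 and every x ∈ ℝ. Then there exist a sequence (β_k) of positive real numbers with β_k → 0 and a sequence (m_k) of natural numbers with m_k → ∞ such that for every k, the m_k-fold iterate of the map x ↦ P(β_k, x) applied to x₁(β_k) equals 0. -/
import Mathlib

/-- Iterates of a continuous map `f` with `f x < x` everywhere eventually become
negative (and do so for arbitrarily large iteration counts). -/
lemma exists_iterate_neg_of_lt (f : ℝ → ℝ) (hf : Continuous f)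
    (hlt : ∀ x : ℝ, f x < x) (x₀ : ℝ) (k : ℕ) :
    ∃ m : ℕ, k ≤ m ∧ f^[m] x₀ < 0 := by
  by_contra h
  push_neg at h
  set a : ℕ → ℝ := fun n => f^[n] x₀ with ha_def
  have hanti : StrictAnti a := by
    apply strictAnti_nat_of_succ_lt
    intro n
    have : a (n + 1) = f (a n) := Function.iterate_succ_apply' f n x₀
    rw [this]
    exact hlt (a n)
  have hbdd : ∀ n, (0 : ℝ) ≤ a n := by
    intro n
    have h1 : a (max n k) ≤ a n := hanti.antitone (le_max_left n k)
    have h2 : (0 : ℝ) ≤ a (max n k) := h (max n k) (le_max_right n k)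
    linarith
  have hbdd' : BddBelow (Set.range a) := ⟨0, by rintro y ⟨n, rfl⟩; exact hbdd n⟩
  have hlim : Filter.Tendsto a Filter.atTop (nhds (⨅ n, a n)) :=
    tendsto_atTop_ciInf hanti.antitone hbdd'
  set L := ⨅ n, a n with hL
  have hlim1 : Filter.Tendsto (fun n => a (n + 1)) Filter.atTop (nhds L) :=
    hlim.comp (Filter.tendsto_add_atTop_nat 1)
  have heq : (fun n => a (n + 1)) = fun n => f (a n) := by
    funext n
    exact Function.iterate_succ_apply' f n x₀
  rw [heq] at hlim1
  have hlim2 : Filter.Tendsto (fun n => f (a n)) Filter.atTop (nhds (f L)) :=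
    (hf.tendsto L).comp hlim
  have : f L = L := tendsto_nhds_unique hlim2 hlim1
  exact absurd this (ne_of_lt (hlt L))

/-- Flashing heteroclinic connections at a homoclinic bifurcation
(Poincaré-map formulation of Theorem A.2). -/
theorem flashing_heteroclinic_at_homoclinic_bifurcation
    (P : ℝ × ℝ → ℝ) (hP : Continuous P)
    (x₁ : ℝ → ℝ) (hx₁ : Continuous x₁)
    (hsign : ∀ β : ℝ, 0 ≤ β → 0 < x₁ β)
    (h0 : ∀ x : ℝ, 0 < x → 0 < P (0, x))
    (hdec : ∀ β : ℝ, 0 < β → ∀ x : ℝ, P (β, x) < x) :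
    ∃ (β : ℕ → ℝ) (m : ℕ → ℕ),
      (∀ k, 0 < β k) ∧
      Filter.Tendsto β Filter.atTop (nhds 0) ∧
      Filter.Tendsto m Filter.atTop Filter.atTop ∧
      ∀ k, (fun x => P (β k, x))^[m k] (x₁ (β k)) = 0 := by
  -- continuity of the parametric iterate
  have hcont : ∀ n : ℕ, Continuous (fun β : ℝ => (fun x => P (β, x))^[n] (x₁ β)) := by
    intro n
    induction n with
    | zero => simpa using hx₁
    | succ n ih =>
      have : (fun β : ℝ => (fun x => P (β, x))^[n + 1] (x₁ β))
          = fun β : ℝ => P (β, (fun x => P (β, x))^[n] (x₁ β)) := by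
        funext β
        exact Function.iterate_succ_apply' _ n _
      rw [this]
      exact hP.comp (continuous_id.prodMk ih)
  -- at β = 0 the iterates stay positive
  have hpos : ∀ n : ℕ, 0 < (fun x => P (0, x))^[n] (x₁ 0) := by
    intro n
    induction n with
    | zero => simpa using hsign 0 le_rfl
    | succ n ih =>
      rw [Function.iterate_succ_apply']
      exact h0 _ ih
  -- for each k produce suitable βₖ, mₖ
  have key : ∀ k : ℕ, ∃ (b : ℝ) (m : ℕ),
      0 < b ∧ b ≤ 1 / (k + 1 : ℝ) ∧ k ≤ m ∧
      (fun x => P (b, x))^[m] (x₁ b) = 0 := by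
    intro k
    set β₀ : ℝ := 1 / (k + 1 : ℝ) with hβ₀
    have hβ₀pos : 0 < β₀ := by positivity
    obtain ⟨m, hkm, hmneg⟩ :=
      exists_iterate_neg_of_lt (fun x => P (β₀, x))
        (hP.comp (Continuous.prodMk_right β₀)) (hdec β₀ hβ₀pos) (x₁ β₀) k
    set g : ℝ → ℝ := fun β => (fun x => P (β, x))^[m] (x₁ β) with hg
    have hgc : ContinuousOn g (Set.Icc 0 β₀) := (hcont m).continuousOn
    have h0mem : (0 : ℝ) ∈ Set.Icc (g β₀) (g 0) :=
      ⟨le_of_lt hmneg, le_of_lt (hpos m)⟩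
    obtain ⟨b, hbmem, hbeq⟩ :=
      intermediate_value_Icc' (le_of_lt hβ₀pos) hgc h0mem
    have hbne : b ≠ 0 := by
      intro h
      rw [h] at hbeq
      exact absurd hbeq.symm (ne_of_lt (hpos m))
    exact ⟨b, m, lt_of_le_of_ne hbmem.1 (Ne.symm hbne), hbmem.2, hkm, hbeq⟩
  choose b m hbpos hble hkm heq using key
  refine ⟨b, m, hbpos, ?_, ?_, heq⟩
  · apply squeeze_zero (fun k => le_of_lt (hbpos k)) hble
    exact tendsto_one_div_add_atTop_nhds_zero_nat
  · exact Filter.tendsto_atTop_mono hkm Filter.tendsto_id
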